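/- arXiv:2106.10621 — 2 statements merged into one kernel-verified Lean document; each statement's English description precedes it below -/
import Mathlib

section
/- If two empirical Hit-Ratio curves satisfy HR₁@K ≥ HR₂@K for all 1 ≤ K ≤ N, then for every sampling size n and every 1 ≤ k ≤ n, the expected sampling Hit-Ratios satisfy E[SHR₁@k] ≥ E[SHR₂@k], where E[SHRᵢ@k] = ∑_{R=1}^N Wⁱ_R · CDF_Binomial(k−1; n−1, (R−1)/(N−1)). -/
noncomputable def Gb (m k : ℕ) (x : ℝ) : ℝ :=
  ∑ l ∈ Finset.range k, (m.choose l : ℝ) * x ^ l * (1 - x) ^ (m - l)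

lemma Gb_nonneg {m k : ℕ} {x : ℝ} (hx0 : 0 ≤ x) (hx1 : x ≤ 1) : 0 ≤ Gb m k x := by
  apply Finset.sum_nonneg
  intro l _
  have : (0:ℝ) ≤ 1 - x := by linarith
  positivity

lemma Gb_mono_k {m k k' : ℕ} {x : ℝ} (hkk : k' ≤ k) (hx0 : 0 ≤ x) (hx1 : x ≤ 1) :
    Gb m k' x ≤ Gb m k x := by
  apply Finset.sum_le_sum_of_subset_of_nonneg (Finset.range_subset_range.2 hkk)
  intro l _ _
  have : (0:ℝ) ≤ 1 - x := by linarith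
  positivity

lemma Gb_rec (m k : ℕ) (x : ℝ) :
    Gb (m+1) (k+1) x = (1 - x) * Gb m (k+1) x + x * Gb m k x := by
  unfold Gb
  rw [Finset.sum_range_succ' (fun l => ((m+1).choose l : ℝ) * x ^ l * (1 - x) ^ (m + 1 - l)) k]
  rw [Finset.mul_sum, Finset.mul_sum, Finset.sum_range_succ'
    (fun l => (1 - x) * ((m.choose l : ℝ) * x ^ l * (1 - x) ^ (m - l))) k]
  have h0 : ((m+1).choose 0 : ℝ) * x ^ 0 * (1-x) ^ (m+1-0)
      = (1 - x) * ((m.choose 0 : ℝ) * x ^ 0 * (1 - x) ^ (m - 0)) := by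
    simp [pow_succ]; ring
  rw [h0]
  have key : ∑ j ∈ Finset.range k, ((m+1).choose (j+1) : ℝ) * x ^ (j+1) * (1 - x) ^ (m + 1 - (j+1))
      = ∑ j ∈ Finset.range k, ((1 - x) * ((m.choose (j+1) : ℝ) * x ^ (j+1) * (1 - x) ^ (m - (j+1)))
          + x * ((m.choose j : ℝ) * x ^ j * (1 - x) ^ (m - j))) := by
    apply Finset.sum_congr rfl
    intro j _
    have hc : ((m+1).choose (j+1) : ℝ) = (m.choose j : ℝ) + (m.choose (j+1) : ℝ) := by
      rw [Nat.choose_succ_succ]; push_cast; ring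
    have hsub : m + 1 - (j + 1) = m - j := by omega
    rw [hc, hsub]
    rcases le_or_gt (j+1) m with h | h
    · have h1 : m - j = (m - (j+1)) + 1 := by omega
      rw [h1, pow_succ]
      ring
    · have h1 : m.choose (j+1) = 0 := Nat.choose_eq_zero_of_lt h
      have h2 : m - (j+1) = 0 := by omega
      rw [h1, h2]
      push_cast
      ring
  rw [key, Finset.sum_add_distrib]
  ring

lemma Gb_anti (m : ℕ) : ∀ (k : ℕ) {x y : ℝ}, 0 ≤ x → x ≤ y → y ≤ 1 →
    Gb m k y ≤ Gb m k x := by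
  induction m with
  | zero =>
    intro k x y hx hxy hy
    rcases k with _ | j
    · simp [Gb]
    · have hval : ∀ z : ℝ, Gb 0 (j+1) z = 1 := by
        intro z
        unfold Gb
        rw [Finset.sum_eq_single 0]
        · simp
        · intro b _ hb
          have : (0:ℕ).choose b = 0 := Nat.choose_eq_zero_of_lt (by omega)
          simp [this]
        · simp
      rw [hval x, hval y]
  | succ m ih =>
    intro k x y hx hxy hy
    rcases k with _ | j
    · simp [Gb]
    · rw [Gb_rec, Gb_rec]
      have h1 : Gb m (j+1) y ≤ Gb m (j+1) x := ih (j+1) hx hxy hy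
      have h2 : Gb m j y ≤ Gb m j x := ih j hx hxy hy
      have h3 : Gb m j x ≤ Gb m (j+1) x := Gb_mono_k (Nat.le_succ j) hx (le_trans hxy hy)
      have h4 : 0 ≤ Gb m j y := Gb_nonneg (le_trans hx hxy) hy
      have h5 : 0 ≤ Gb m (j+1) y := Gb_nonneg (le_trans hx hxy) hy
      nlinarith

/-- If `HR₁@K ≥ HR₂@K` for all `K`, then the expected sampling hit-ratios
(with binomial-CDF hit probabilities) satisfy `E[SHR₁@k] ≥ E[SHR₂@k]`. -/
theorem stmt_5 (N : ℕ) (hN : 2 ≤ N) (W₁ W₂ : ℕ → ℝ)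
    (hW₁ : ∀ R, 0 ≤ W₁ R) (hW₂ : ∀ R, 0 ≤ W₂ R)
    (hsum₁ : ∑ R ∈ Finset.Icc 1 N, W₁ R = 1)
    (hsum₂ : ∑ R ∈ Finset.Icc 1 N, W₂ R = 1)
    (hdom : ∀ K, 1 ≤ K → K ≤ N →
      ∑ R ∈ Finset.Icc 1 K, W₂ R ≤ ∑ R ∈ Finset.Icc 1 K, W₁ R)
    (n k : ℕ) (hn : 1 ≤ n) (hk1 : 1 ≤ k) (hkn : k ≤ n) :
    ∑ R ∈ Finset.Icc 1 N, W₂ R *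
        (∑ l ∈ Finset.range k, ((n - 1).choose l : ℝ)
          * (((R : ℝ) - 1) / ((N : ℝ) - 1)) ^ l
          * (1 - ((R : ℝ) - 1) / ((N : ℝ) - 1)) ^ (n - 1 - l))
      ≤ ∑ R ∈ Finset.Icc 1 N, W₁ R *
        (∑ l ∈ Finset.range k, ((n - 1).choose l : ℝ)
          * (((R : ℝ) - 1) / ((N : ℝ) - 1)) ^ l
          * (1 - ((R : ℝ) - 1) / ((N : ℝ) - 1)) ^ (n - 1 - l)) := by
  set φ : ℕ → ℝ := fun R => Gb (n-1) k (((R : ℝ) - 1) / ((N : ℝ) - 1)) with hφ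
  have hNR : (0:ℝ) < (N:ℝ) - 1 := by
    have : (2:ℝ) ≤ (N:ℝ) := by exact_mod_cast hN
    linarith
  -- x_R bounds
  have hx0 : ∀ R : ℕ, 1 ≤ R → 0 ≤ ((R : ℝ) - 1) / ((N : ℝ) - 1) := by
    intro R hR
    apply div_nonneg _ (le_of_lt hNR)
    have : (1:ℝ) ≤ (R:ℝ) := by exact_mod_cast hR
    linarith
  have hx1 : ∀ R : ℕ, R ≤ N → ((R : ℝ) - 1) / ((N : ℝ) - 1) ≤ 1 := by
    intro R hR
    rw [div_le_one hNR]
    have : (R:ℝ) ≤ (N:ℝ) := by exact_mod_cast hR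
    linarith
  -- φ antitone on [1, N]
  have hφanti : ∀ R : ℕ, 1 ≤ R → R + 1 ≤ N → φ (R+1) ≤ φ R := by
    intro R hR1 hRN
    apply Gb_anti
    · exact hx0 R hR1
    · push_cast
      gcongr <;> linarith
    · exact hx1 (R+1) hRN
  -- rewrite both sides using φ and reindex over range N
  have hrw : ∀ W : ℕ → ℝ, ∑ R ∈ Finset.Icc 1 N, W R *
        (∑ l ∈ Finset.range k, ((n - 1).choose l : ℝ)
          * (((R : ℝ) - 1) / ((N : ℝ) - 1)) ^ l
          * (1 - ((R : ℝ) - 1) / ((N : ℝ) - 1)) ^ (n - 1 - l))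
      = ∑ i ∈ Finset.range N, φ (i+1) * W (i+1) := by
    intro W
    rw [show Finset.Icc 1 N = Finset.Ico 1 (N+1) by rw [Finset.Ico_add_one_right_eq_Icc],
      Finset.sum_Ico_eq_sum_range]
    simp only [Nat.add_sub_cancel]
    apply Finset.sum_congr rfl
    intro i _
    rw [hφ]
    simp only [Nat.add_comm 1 i]
    unfold Gb
    ring
  rw [hrw W₁, hrw W₂]
  -- partial sums over range equal cumulative sums over Icc
  have hH : ∀ (W : ℕ → ℝ) (j : ℕ), ∑ i ∈ Finset.range j, W (i+1) = ∑ R ∈ Finset.Icc 1 j, W R := by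
    intro W j
    rw [show Finset.Icc 1 j = Finset.Ico 1 (j+1) by rw [Finset.Ico_add_one_right_eq_Icc],
      Finset.sum_Ico_eq_sum_range]
    simp only [Nat.add_sub_cancel]
    apply Finset.sum_congr rfl
    intro i _
    rw [Nat.add_comm 1 i]
  -- Abel summation
  have habel : ∀ W : ℕ → ℝ, ∑ i ∈ Finset.range N, φ (i+1) * W (i+1)
      = φ N * (∑ i ∈ Finset.range N, W (i+1))
        - ∑ i ∈ Finset.range (N-1), (φ (i+1+1) - φ (i+1)) * (∑ j ∈ Finset.range (i+1), W (j+1)) := by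
    intro W
    have h := Finset.sum_range_by_parts (fun i => φ (i+1)) (fun i => W (i+1)) N
    simp only [smul_eq_mul] at h
    rw [h, Nat.sub_add_cancel (by omega : 1 ≤ N)]
  rw [habel W₁, habel W₂, hH W₁ N, hH W₂ N, hsum₁, hsum₂]
  have hterm : ∑ i ∈ Finset.range (N-1), (φ (i+1+1) - φ (i+1)) * (∑ j ∈ Finset.range (i+1), W₁ (j+1))
      ≤ ∑ i ∈ Finset.range (N-1), (φ (i+1+1) - φ (i+1)) * (∑ j ∈ Finset.range (i+1), W₂ (j+1)) := by
    apply Finset.sum_le_sum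
    intro i hi
    have hiN : i + 1 + 1 ≤ N := by
      have := Finset.mem_range.mp hi; omega
    have hΔ : φ (i+1+1) - φ (i+1) ≤ 0 := by
      have := hφanti (i+1) (by omega) hiN
      linarith
    have hle : ∑ j ∈ Finset.range (i+1), W₂ (j+1) ≤ ∑ j ∈ Finset.range (i+1), W₁ (j+1) := by
      rw [hH W₁, hH W₂]
      exact hdom (i+1) (by omega) (by omega)
    nlinarith
  linarith
end

section
/- Let g be the real-valued sequence defined by g(1)^a = a(N-1)^a B(a, n) and g(k+1)^a = g(k)^a + a(N-1)^a C(n-1, k) B(a+k, n-k) for 1 ≤ k ≤ n-1, where a > 0. Then g(n) = N - 1 (equivalently, the mapping function satisfies f(n; a) = N). -/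
/-- The Beta function `B(x,y) = ∫₀¹ t^(x-1) (1-t)^(y-1) dt`. -/
noncomputable def betaFn (x y : ℝ) : ℝ :=
  ∫ t in (0:ℝ)..1, t ^ (x - 1) * (1 - t) ^ (y - 1)

open Finset in
lemma betaSum (a : ℝ) (ha : 0 < a) (n : ℕ) (hn : 1 ≤ n) :
    ∑ k ∈ range n, ((n - 1).choose k : ℝ) * betaFn (a + k) ((n : ℝ) - k) = 1 / a := by
  have hint : ∀ k ∈ range n, IntervalIntegrable
      (fun t : ℝ => ((n - 1).choose k : ℝ) * (t ^ (a + k - 1) * (1 - t) ^ ((n : ℝ) - k - 1)))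
      MeasureTheory.volume 0 1 := by
    intro k hk
    rw [mem_range] at hk
    have he : ((n : ℝ) - k - 1) = ((n - 1 - k : ℕ) : ℝ) := by
      have : k ≤ n - 1 := Nat.le_pred_of_lt hk
      push_cast [Nat.cast_sub this, Nat.cast_sub hn]
      ring
    have : (fun t : ℝ => ((n - 1).choose k : ℝ) * (t ^ (a + k - 1) * (1 - t) ^ ((n : ℝ) - k - 1)))
        = fun t : ℝ => ((n - 1).choose k : ℝ) * (t ^ (a + k - 1) * (1 - t) ^ (n - 1 - k)) := by
      funext t
      rw [he, Real.rpow_natCast]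
    rw [this]
    apply IntervalIntegrable.const_mul
    apply IntervalIntegrable.mul_continuousOn
    · exact intervalIntegral.intervalIntegrable_rpow' (by have := (Nat.cast_nonneg k : (0:ℝ) ≤ k); linarith)
    · exact (continuous_const.sub continuous_id).pow _ |>.continuousOn
  have hsum : ∑ k ∈ range n, ((n - 1).choose k : ℝ) * betaFn (a + k) ((n : ℝ) - k)
      = ∫ t in (0:ℝ)..1, ∑ k ∈ range n,
          ((n - 1).choose k : ℝ) * (t ^ (a + k - 1) * (1 - t) ^ ((n : ℝ) - k - 1)) := by
    rw [intervalIntegral.integral_finset_sum hint]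
    unfold betaFn
    congr 1
    funext k
    rw [intervalIntegral.integral_const_mul]
  rw [hsum]
  have hcong : ∫ t in (0:ℝ)..1, ∑ k ∈ range n,
      ((n - 1).choose k : ℝ) * (t ^ (a + k - 1) * (1 - t) ^ ((n : ℝ) - k - 1))
      = ∫ t in (0:ℝ)..1, t ^ (a - 1) := by
    apply intervalIntegral.integral_congr_ae
    filter_upwards with t ht
    rw [Set.uIoc_of_le (by norm_num : (0:ℝ) ≤ 1)] at ht
    obtain ⟨ht0, ht1⟩ := ht
    have key : ∀ k ∈ range n,
        ((n - 1).choose k : ℝ) * (t ^ (a + k - 1) * (1 - t) ^ ((n : ℝ) - k - 1))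
        = t ^ (a - 1) * (((n - 1).choose k : ℝ) * (t ^ k * (1 - t) ^ (n - 1 - k))) := by
      intro k hk
      rw [mem_range] at hk
      have he : ((n : ℝ) - k - 1) = ((n - 1 - k : ℕ) : ℝ) := by
        have : k ≤ n - 1 := Nat.le_pred_of_lt hk
        push_cast [Nat.cast_sub this, Nat.cast_sub hn]
        ring
      have h1 : a + (k : ℝ) - 1 = (a - 1) + (k : ℝ) := by ring
      rw [he, Real.rpow_natCast, h1, Real.rpow_add ht0, Real.rpow_natCast]
      ring
    rw [Finset.sum_congr rfl key, ← Finset.mul_sum]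
    have : ∑ k ∈ range n, ((n - 1).choose k : ℝ) * (t ^ k * (1 - t) ^ (n - 1 - k)) = 1 := by
      have hb := add_pow t (1 - t) (n - 1)
      simp only [add_sub_cancel, one_pow] at hb
      have hrn : n - 1 + 1 = n := Nat.succ_pred_eq_of_pos hn
      rw [hrn] at hb
      calc ∑ k ∈ range n, ((n - 1).choose k : ℝ) * (t ^ k * (1 - t) ^ (n - 1 - k))
          = ∑ m ∈ range n, t ^ m * (1 - t) ^ (n - 1 - m) * ((n - 1).choose m : ℝ) := by
            apply Finset.sum_congr rfl; intros; ring
        _ = 1 := hb.symm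
    rw [this, mul_one]
  rw [hcong, integral_rpow (Or.inl (by linarith))]
  rw [sub_add_cancel, Real.one_rpow, Real.zero_rpow ha.ne']
  ring

/-- The Beta-mapping sequence `g(k) = f(k;a) − 1` defined by
`g(1)^a = a(N-1)^a B(a,n)` and
`g(k+1)^a = g(k)^a + a(N-1)^a C(n-1,k) B(a+k,n-k)` satisfies `g(n) = N − 1`,
i.e. `f(n;a) = N`. -/
theorem stmt_9 (a : ℝ) (ha : 0 < a) (N n : ℕ) (hN : 2 ≤ N) (hn : 1 ≤ n)
    (g : ℕ → ℝ) (hg_nonneg : ∀ k, 0 ≤ g k)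
    (hg1 : g 1 ^ a = a * ((N : ℝ) - 1) ^ a * betaFn a n)
    (hgrec : ∀ k : ℕ, 1 ≤ k → k ≤ n - 1 →
      g (k + 1) ^ a = g k ^ a
        + a * ((N : ℝ) - 1) ^ a * ((n - 1).choose k : ℝ)
          * betaFn (a + k) ((n : ℝ) - k)) :
    g n = (N : ℝ) - 1 := by
  have hN1 : (0:ℝ) ≤ (N : ℝ) - 1 := by
    have : (2:ℝ) ≤ N := by exact_mod_cast hN
    linarith
  have hmain : ∀ k, 1 ≤ k → k ≤ n → g k ^ a
      = a * ((N : ℝ) - 1) ^ a * ∑ j ∈ Finset.range k,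
          ((n - 1).choose j : ℝ) * betaFn (a + j) ((n : ℝ) - j) := by
    intro k hk1 hkn
    induction k with
    | zero => omega
    | succ k ih =>
      rcases Nat.eq_or_lt_of_le hk1 with h1 | h1
      · simp only [← h1]
        rw [hg1]
        simp
      · have hk : 1 ≤ k := Nat.lt_succ_iff.mp h1
        have hkn' : k ≤ n - 1 := by omega
        rw [hgrec k hk hkn', ih hk (by omega), Finset.sum_range_succ]
        ring
  have hgn : g n ^ a = ((N : ℝ) - 1) ^ a := by
    rw [hmain n hn le_rfl, betaSum a ha n hn]
    field_simp
  have := congrArg (fun x => x ^ (1 / a)) hgn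
  simpa [← Real.rpow_natCast, ← Real.rpow_mul (hg_nonneg n), ← Real.rpow_mul hN1,
    mul_one_div, div_self ha.ne', mul_inv_cancel₀ ha.ne', Real.rpow_one] using this
end
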